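/- Let V_1, …, V_m be subspaces of a nonzero finite-dimensional complex vector space V with positive integer weights ω_1, …, ω_m, and suppose the configuration {V_i} is ℘_ω-semistable. Suppose V = H_1 ⊕ ⋯ ⊕ H_l is a direct-sum decomposition into nonzero subspaces such that V_i = ⊕_{q=1}^l (V_i ∩ H_q) for every i. Then for every q, the normalized total weighted dimension (1/dim H_q)·Σ_{i=1}^m ω_i·dim(V_i ∩ H_q) of the induced subconfiguration {V_i ∩ H_q} equals ℘_ω({V_i}) = (1/dim V)·Σ_i ω_i·dim V_i; in particular, each induced configuration {V_i ∩ H_q} of subspaces of H_q is ℘_ω-semistable. -/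

import Mathlib

open Module

noncomputable section

variable {V : Type*} [AddCommGroup V] [Module ℂ V]

/-- `℘_ω(H) = (1/dim H)·Σ_i ω_i·dim(V_i ∩ H)` for a configuration of subspaces of `V`. -/
def slopeSub {m : ℕ} (ω : Fin m → ℕ) (Vc : Fin m → Submodule ℂ V) (H : Submodule ℂ V) : ℚ :=
  (∑ i, (ω i : ℚ) * (finrank ℂ ↥(Vc i ⊓ H) : ℚ)) / (finrank ℂ ↥H : ℚ)

/-- `℘_ω({V_i}) = (1/dim V)·Σ_i ω_i·dim V_i`. -/
def totalSub {m : ℕ} (ω : Fin m → ℕ) (Vc : Fin m → Submodule ℂ V) : ℚ :=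
  (∑ i, (ω i : ℚ) * (finrank ℂ ↥(Vc i) : ℚ)) / (finrank ℂ V : ℚ)

/-- The configuration `{V_i}` is `℘_ω`-semistable. -/
def SubSemistable {m : ℕ} (ω : Fin m → ℕ) (Vc : Fin m → Submodule ℂ V) : Prop :=
  ∀ H : Submodule ℂ V, H ≠ ⊥ → H ≠ ⊤ → slopeSub ω Vc H ≤ totalSub ω Vc

/-- The configuration `{V_i}` is `℘_ω`-stable. -/
def SubStable {m : ℕ} (ω : Fin m → ℕ) (Vc : Fin m → Submodule ℂ V) : Prop :=
  ∀ H : Submodule ℂ V, H ≠ ⊥ → H ≠ ⊤ → slopeSub ω Vc H < totalSub ω Vc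

lemma finrank_iSup_eq_sum' {W : Type*} [AddCommGroup W] [Module ℂ W] [FiniteDimensional ℂ W]
    {l : ℕ} (f : Fin l → Submodule ℂ W) (h : iSupIndep f) :
    finrank ℂ ↥(⨆ q, f q) = ∑ q, finrank ℂ ↥(f q) := by
  have key : ∀ s : Finset (Fin l),
      finrank ℂ ↥(⨆ q ∈ s, f q) = ∑ q ∈ s, finrank ℂ ↥(f q) := by
    intro s
    induction s using Finset.induction_on with
    | empty => simp
    | @insert a s ha ih =>
      have hsup : (⨆ q ∈ insert a s, f q) = f a ⊔ ⨆ q ∈ s, f q := by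
        rw [Finset.iSup_insert]
      have hdisj : Disjoint (f a) (⨆ q ∈ s, f q) := by
        refine (h a).mono_right ?_
        refine iSup₂_le fun q hq => ?_
        exact le_iSup₂_of_le q (by rintro rfl; exact ha hq) le_rfl
      rw [hsup, Finset.sum_insert ha, ← ih]
      have := Submodule.finrank_sup_add_finrank_inf_eq (f a) (⨆ q ∈ s, f q)
      rw [hdisj.eq_bot, finrank_bot] at this
      omega
  have h2 : (⨆ q, f q) = ⨆ q ∈ Finset.univ, f q := by simp
  rw [h2, key]

/-- in a semistable configuration, any compatible direct-sum decomposition has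
all its summands of the same normalized total weighted dimension; in particular each induced
configuration is semistable. -/
theorem stmt_12 (V : Type*) [AddCommGroup V] [Module ℂ V] [FiniteDimensional ℂ V] [Nontrivial V]
    (m : ℕ) (hm : 1 ≤ m) (ω : Fin m → ℕ) (hω : ∀ i, 0 < ω i)
    (Vc : Fin m → Submodule ℂ V) (hss : SubSemistable ω Vc)
    (l : ℕ) (H : Fin l → Submodule ℂ V) (hH0 : ∀ q, H q ≠ ⊥)
    (hind : iSupIndep H) (hsup : ⨆ q, H q = ⊤)
    (hdecomp : ∀ i, Vc i = ⨆ q, Vc i ⊓ H q) :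
    ∀ q : Fin l,
      (∑ i, (ω i : ℚ) * (finrank ℂ ↥(Vc i ⊓ H q) : ℚ)) / (finrank ℂ ↥(H q) : ℚ) =
        totalSub ω Vc ∧
      (∀ S : Submodule ℂ V, S ≠ ⊥ → S < H q →
        (∑ i, (ω i : ℚ) * (finrank ℂ ↥(Vc i ⊓ H q ⊓ S) : ℚ)) / (finrank ℂ ↥S : ℚ) ≤
          (∑ i, (ω i : ℚ) * (finrank ℂ ↥(Vc i ⊓ H q) : ℚ)) / (finrank ℂ ↥(H q) : ℚ)) := by
  -- notation
  set T : ℚ := totalSub ω Vc with hT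
  set N : Fin l → ℚ := fun q => ∑ i, (ω i : ℚ) * (finrank ℂ ↥(Vc i ⊓ H q) : ℚ) with hN
  set d : Fin l → ℚ := fun q => (finrank ℂ ↥(H q) : ℚ) with hd
  have hdimV : 0 < finrank ℂ V := finrank_pos
  have hdpos : ∀ q, 0 < d q := by
    intro q
    have h1 : finrank ℂ ↥(H q) ≠ 0 := by
      simpa [Submodule.finrank_eq_zero] using hH0 q
    have := Nat.pos_of_ne_zero h1
    simp only [hd]
    exact_mod_cast this
  -- sum of dims of H q is dim V
  have hdsum : ∑ q, finrank ℂ ↥(H q) = finrank ℂ V := by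
    have := finrank_iSup_eq_sum' H hind
    rw [hsup] at this
    simpa [finrank_top] using this.symm
  -- each Vc i has dim equal to sum over q
  have hVsum : ∀ i, (finrank ℂ ↥(Vc i) : ℚ) = ∑ q, (finrank ℂ ↥(Vc i ⊓ H q) : ℚ) := by
    intro i
    have hindi : iSupIndep (fun q => Vc i ⊓ H q) := hind.mono fun q => inf_le_right
    have := finrank_iSup_eq_sum' (fun q => Vc i ⊓ H q) hindi
    rw [← hdecomp i] at this
    exact_mod_cast this
  -- total numerator
  have hNsum : ∑ q, N q = ∑ i, (ω i : ℚ) * (finrank ℂ ↥(Vc i) : ℚ) := by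
    rw [Finset.sum_comm]
    exact Finset.sum_congr rfl fun i _ => by rw [hVsum i, Finset.mul_sum]
  have hTd : T * (finrank ℂ V : ℚ) = ∑ i, (ω i : ℚ) * (finrank ℂ ↥(Vc i) : ℚ) := by
    rw [hT, totalSub, div_mul_cancel₀]
    exact_mod_cast hdimV.ne'
  -- key inequality N q ≤ T * d q
  have hle : ∀ q, N q ≤ T * d q := by
    intro q
    by_cases htop : H q = ⊤
    · have e1 : finrank ℂ ↥(H q) = finrank ℂ V := by rw [htop]; exact finrank_top ℂ V
      have e2 : ∀ i, Vc i ⊓ H q = Vc i := fun i => by rw [htop, inf_top_eq]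
      have : N q = T * d q := by
        calc N q = ∑ i, (ω i : ℚ) * (finrank ℂ ↥(Vc i) : ℚ) :=
              Finset.sum_congr rfl fun i _ => by rw [e2 i]
          _ = T * (finrank ℂ V : ℚ) := hTd.symm
          _ = T * d q := by
              show T * (finrank ℂ V : ℚ) = T * (finrank ℂ ↥(H q) : ℚ)
              rw [e1]
      exact this.le
    · have := hss (H q) (hH0 q) htop
      rw [slopeSub] at this
      calc N q = (N q / d q) * d q := by rw [div_mul_cancel₀ _ (hdpos q).ne']
        _ ≤ T * d q := by
            apply mul_le_mul_of_nonneg_right _ (hdpos q).le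
            exact this
  -- equality from summation
  have hsumeq : ∑ q, (T * d q - N q) = 0 := by
    have h1 : ∑ q, T * d q = T * (finrank ℂ V : ℚ) := by
      rw [← Finset.mul_sum, hd]
      congr 1
      rw [← hdsum, Nat.cast_sum]
    rw [Finset.sum_sub_distrib, h1, hTd, hNsum, sub_self]
  have heq : ∀ q, N q = T * d q := by
    intro q
    have := (Finset.sum_eq_zero_iff_of_nonneg
      (fun q _ => sub_nonneg.mpr (hle q))).mp hsumeq q (Finset.mem_univ q)
    linarith [sub_eq_zero.mp this]
  intro q
  have hmain : N q / d q = T := by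
    rw [heq q, mul_div_assoc, div_self (hdpos q).ne', mul_one]
  refine ⟨hmain, fun S hS0 hSlt => ?_⟩
  have hSle : S ≤ H q := hSlt.le
  have hinter : ∀ i, Vc i ⊓ H q ⊓ S = Vc i ⊓ S := by
    intro i
    rw [inf_assoc, inf_eq_right.mpr hSle]
  have hSne : S ≠ ⊤ := by
    intro h
    rw [h] at hSlt
    exact absurd le_top (not_le_of_gt hSlt)
  have := hss S hS0 hSne
  rw [slopeSub] at this
  calc (∑ i, (ω i : ℚ) * (finrank ℂ ↥(Vc i ⊓ H q ⊓ S) : ℚ)) / (finrank ℂ ↥S : ℚ)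
      = (∑ i, (ω i : ℚ) * (finrank ℂ ↥(Vc i ⊓ S) : ℚ)) / (finrank ℂ ↥S : ℚ) := by
        congr 1
        exact Finset.sum_congr rfl fun i _ => by rw [hinter i]
    _ ≤ T := this
    _ = N q / d q := hmain.symm
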